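/- In ℂ[x₁,…,xₙ,v], consider the polynomials F₁ = −x₂ + x₁(x₁+v), F₂ = −x₃ + x₂(x₁+2v), …, F_{n−1} = −xₙ + x_{n−1}(x₁+(n−1)v), Fₙ = xₙ(x₁+nv). Then the quotient ring ℂ[x₁,…,xₙ,v]/(F₁,…,Fₙ) is isomorphic as a ℂ-algebra to ℂ[x₁,v]/(∏_{m=0}^{n} (x₁ + m v)). -/

import Mathlib

open MvPolynomial

/-- The defining polynomials `F₁,…,Fₙ` in `ℂ[x₁,…,xₙ,v]`, with variables indexed by
`Option (Fin n)`: `some j` is `x_{j+1}` and `none` is `v`. -/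
noncomputable def petersonF (n : ℕ) (i : Fin n) : MvPolynomial (Option (Fin n)) ℂ :=
  if h : (i : ℕ) + 1 < n then
    -X (some ⟨(i : ℕ) + 1, h⟩) +
      X (some i) * (X (some ⟨0, i.pos⟩) + C (((i : ℕ) + 1 : ℕ) : ℂ) * X none)
  else
    X (some i) * (X (some ⟨0, i.pos⟩) + C ((n : ℕ) : ℂ) * X none)

/-- `ℂ[x₁,…,xₙ,v]/(F₁,…,Fₙ)`. -/
noncomputable abbrev petersonQuot (n : ℕ) : Type :=
  MvPolynomial (Option (Fin n)) ℂ ⧸ Ideal.span (Set.range (petersonF n))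

/-- `∏_{m=0}^{n} (x₁ + m v)` in `ℂ[x₁, v] = ℂ[X 0, X 1]`. -/
noncomputable def prodPoly (n : ℕ) : MvPolynomial (Fin 2) ℂ :=
  ∏ m ∈ Finset.range (n + 1), ((X 0 : MvPolynomial (Fin 2) ℂ) + C ((m : ℕ) : ℂ) * X 1)

/-- `ℂ[x₁,v]/(∏_{m=0}^{n}(x₁+mv))`. -/
noncomputable abbrev prodQuot (n : ℕ) : Type :=
  MvPolynomial (Fin 2) ℂ ⧸ Ideal.span {prodPoly n}

section aux

variable (n : ℕ) (hn : 0 < n)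

/-- `P j = ∏_{m=0}^{j} (X0 + m X1)` in `ℂ[X0,X1]`. -/
noncomputable def Ppoly (j : ℕ) : MvPolynomial (Fin 2) ℂ :=
  ∏ m ∈ Finset.range (j + 1), ((X 0 : MvPolynomial (Fin 2) ℂ) + C ((m : ℕ) : ℂ) * X 1)

/-- `Q j = ∏_{m=0}^{j} (x₁ + m v)` in the big ring. -/
noncomputable def Qpoly (j : ℕ) : MvPolynomial (Option (Fin n)) ℂ :=
  ∏ m ∈ Finset.range (j + 1),
    ((X (some ⟨0, hn⟩) : MvPolynomial (Option (Fin n)) ℂ) + C ((m : ℕ) : ℂ) * X none)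

noncomputable def phiAux : MvPolynomial (Option (Fin n)) ℂ →ₐ[ℂ] MvPolynomial (Fin 2) ℂ :=
  aeval (fun o => Option.rec (X 1) (fun j => Ppoly (j : ℕ)) o)

noncomputable def psiAux : MvPolynomial (Fin 2) ℂ →ₐ[ℂ] MvPolynomial (Option (Fin n)) ℂ :=
  aeval (fun i : Fin 2 => if i = 0 then X (some ⟨0, hn⟩) else X none)

lemma phiAux_X_some (j : Fin n) : phiAux n (X (some j)) = Ppoly (j : ℕ) := by
  simp [phiAux]

lemma phiAux_X_none : phiAux n (X none) = X 1 := by simp [phiAux]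

lemma psiAux_P (j : ℕ) : psiAux n hn (Ppoly j) = Qpoly n hn j := by
  simp only [Ppoly, Qpoly, map_prod, map_add, map_mul, psiAux, aeval_X, algHom_C, aeval_C]
  norm_num

lemma phiAux_mem (i : Fin n) :
    phiAux n (petersonF n i) ∈ Ideal.span {prodPoly n} := by
  have h0 : Ppoly 0 = X 0 := by simp [Ppoly]
  rw [petersonF]
  split_ifs with h
  · have heq : phiAux n (-X (some (⟨(i : ℕ) + 1, h⟩ : Fin n)) +
        X (some i) * (X (some ⟨0, i.pos⟩) + C (((i : ℕ) + 1 : ℕ) : ℂ) * X none)) = 0 := by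
      simp only [map_add, map_neg, map_mul, phiAux_X_some, phiAux_X_none, algHom_C,
        MvPolynomial.algebraMap_eq]
      have hstep : Ppoly ((i : ℕ) + 1)
          = Ppoly (i : ℕ) * (X 0 + C (((i : ℕ) + 1 : ℕ) : ℂ) * X 1) := by
        rw [Ppoly, Finset.prod_range_succ]; rfl
      rw [hstep, h0]
      ring
    rw [heq]; exact Ideal.zero_mem _
  · have hi : (i : ℕ) + 1 = n := le_antisymm i.isLt (not_lt.mp h)
    have heq : phiAux n (X (some i) * (X (some ⟨0, i.pos⟩) + C ((n : ℕ) : ℂ) * X none)) =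
        prodPoly n := by
      simp only [map_add, map_mul, phiAux_X_some, phiAux_X_none, algHom_C,
        MvPolynomial.algebraMap_eq]
      rw [h0, prodPoly, show ((n : ℕ) : ℂ) = (((i : ℕ) + 1 : ℕ) : ℂ) by rw [hi],
        show n + 1 = ((i : ℕ) + 1) + 1 by rw [hi], Finset.prod_range_succ, Ppoly]
    rw [heq]; exact Ideal.subset_span rfl

lemma X_sub_Q_mem : ∀ (k : ℕ) (hk : k < n),
    (X (some ⟨k, hk⟩) : MvPolynomial (Option (Fin n)) ℂ) - Qpoly n hn k ∈
      Ideal.span (Set.range (petersonF n)) := by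
  intro k
  induction k with
  | zero =>
    intro hk
    have : Qpoly n hn 0 = X (some ⟨0, hn⟩) := by simp [Qpoly]
    rw [this]
    simp
  | succ k ih =>
    intro hk
    have hk' : k < n := Nat.lt_of_succ_lt hk
    have hQ : Qpoly n hn (k + 1) =
        Qpoly n hn k * (X (some ⟨0, hn⟩) + C (((k : ℕ) + 1 : ℕ) : ℂ) * X none) := by
      rw [Qpoly, Finset.prod_range_succ]; rfl
    have hF : petersonF n ⟨k, hk'⟩ =
        -X (some ⟨k + 1, hk⟩) +
          X (some ⟨k, hk'⟩) * (X (some ⟨0, hn⟩) + C ((k + 1 : ℕ) : ℂ) * X none) := by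
      rw [petersonF, dif_pos]
    have key : (X (some ⟨k + 1, hk⟩) : MvPolynomial (Option (Fin n)) ℂ) - Qpoly n hn (k + 1) =
        -(petersonF n ⟨k, hk'⟩) +
          (X (some ⟨k, hk'⟩) - Qpoly n hn k) *
            (X (some ⟨0, hn⟩) + C ((k + 1 : ℕ) : ℂ) * X none) := by
      rw [hF, hQ]; push_cast; ring
    rw [key]
    exact Ideal.add_mem _ (neg_mem (Ideal.subset_span ⟨_, rfl⟩))
      (Ideal.mul_mem_right _ _ (ih hk'))

lemma psiAux_prod_mem :
    psiAux n hn (prodPoly n) ∈ Ideal.span (Set.range (petersonF n)) := by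
  obtain ⟨k, rfl⟩ : ∃ k, n = k + 1 := ⟨n - 1, (Nat.succ_pred_eq_of_pos hn).symm⟩
  have hk : k < k + 1 := Nat.lt_succ_self k
  have h1 : psiAux (k + 1) hn (prodPoly (k + 1)) = Qpoly (k + 1) hn (k + 1) := by
    rw [show prodPoly (k + 1) = Ppoly (k + 1) from rfl, psiAux_P]
  have hQ : Qpoly (k + 1) hn (k + 1) =
      Qpoly (k + 1) hn k * (X (some ⟨0, hn⟩) + C ((k + 1 : ℕ) : ℂ) * X none) := by
    rw [Qpoly, Finset.prod_range_succ]; rfl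
  have hF : petersonF (k + 1) ⟨k, hk⟩ =
      X (some ⟨k, hk⟩) * (X (some ⟨0, hn⟩) + C ((k + 1 : ℕ) : ℂ) * X none) := by
    rw [petersonF, dif_neg (lt_irrefl (k + 1))]
  have key : psiAux (k + 1) hn (prodPoly (k + 1)) =
      petersonF (k + 1) ⟨k, hk⟩ -
        (X (some ⟨k, hk⟩) - Qpoly (k + 1) hn k) *
          (X (some ⟨0, hn⟩) + C ((k + 1 : ℕ) : ℂ) * X none) := by
    rw [h1, hQ, hF]; ring
  rw [key]
  exact Ideal.sub_mem _ (Ideal.subset_span ⟨_, rfl⟩)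
    (Ideal.mul_mem_right _ _ (X_sub_Q_mem (k + 1) hn k hk))

end aux

theorem stmt_7 (n : ℕ) (hn : 0 < n) :
    ∃ e : petersonQuot n ≃ₐ[ℂ] prodQuot n,
      (∀ j : Fin n,
        e (Ideal.Quotient.mk _ (X (some j))) =
          Ideal.Quotient.mk _ (∏ m ∈ Finset.range ((j : ℕ) + 1),
            ((X 0 : MvPolynomial (Fin 2) ℂ) + C ((m : ℕ) : ℂ) * X 1))) ∧
      e (Ideal.Quotient.mk _ (X none)) = Ideal.Quotient.mk _ (X 1) := by
  set I := Ideal.span (Set.range (petersonF n)) with hI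
  set J := Ideal.span {prodPoly n} with hJ
  have hΦ0 : ∀ a ∈ I, ((Ideal.Quotient.mkₐ ℂ J).comp (phiAux n)) a = 0 := by
    intro a ha
    have h : a ∈ Ideal.comap ((Ideal.Quotient.mkₐ ℂ J).comp (phiAux n)).toRingHom ⊥ := by
      refine Ideal.span_le.mpr ?_ ha
      rintro _ ⟨i, rfl⟩
      simp only [SetLike.mem_coe, Ideal.mem_comap, AlgHom.toRingHom_eq_coe, RingHom.coe_coe,
        AlgHom.coe_comp, Function.comp_apply, Ideal.mem_bot, Ideal.Quotient.mkₐ_eq_mk]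
      rw [Ideal.Quotient.eq_zero_iff_mem]
      exact phiAux_mem n i
    rw [Ideal.mem_comap, Ideal.mem_bot] at h
    exact h
  have hΨ0 : ∀ a ∈ J, ((Ideal.Quotient.mkₐ ℂ I).comp (psiAux n hn)) a = 0 := by
    intro a ha
    have h : a ∈ Ideal.comap ((Ideal.Quotient.mkₐ ℂ I).comp (psiAux n hn)).toRingHom ⊥ := by
      refine Ideal.span_le.mpr ?_ ha
      rintro _ rfl
      simp only [SetLike.mem_coe, Ideal.mem_comap, AlgHom.toRingHom_eq_coe, RingHom.coe_coe,
        AlgHom.coe_comp, Function.comp_apply, Ideal.mem_bot, Ideal.Quotient.mkₐ_eq_mk]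
      rw [Ideal.Quotient.eq_zero_iff_mem]
      exact psiAux_prod_mem n hn
    rw [Ideal.mem_comap, Ideal.mem_bot] at h
    exact h
  set Φ : petersonQuot n →ₐ[ℂ] prodQuot n :=
    Ideal.Quotient.liftₐ I ((Ideal.Quotient.mkₐ ℂ J).comp (phiAux n)) hΦ0 with hΦ
  set Ψ : prodQuot n →ₐ[ℂ] petersonQuot n :=
    Ideal.Quotient.liftₐ J ((Ideal.Quotient.mkₐ ℂ I).comp (psiAux n hn)) hΨ0 with hΨ
  have hΦmk : ∀ p, Φ (Ideal.Quotient.mk I p) = Ideal.Quotient.mk J (phiAux n p) := fun p =>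
    Ideal.Quotient.liftₐ_apply _ _ _ _
  have hΨmk : ∀ p, Ψ (Ideal.Quotient.mk J p) = Ideal.Quotient.mk I (psiAux n hn p) := fun p =>
    Ideal.Quotient.liftₐ_apply _ _ _ _
  have h1 : Φ.comp Ψ = AlgHom.id ℂ (prodQuot n) := by
    apply Ideal.Quotient.algHom_ext
    apply MvPolynomial.algHom_ext
    intro i
    simp only [AlgHom.coe_comp, Function.comp_apply, Ideal.Quotient.mkₐ_eq_mk, AlgHom.coe_id,
      id_eq]
    rw [hΨmk, hΦmk]
    have hfix : phiAux n ((psiAux n hn) (X i)) = X i := by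
      by_cases h : i = 0
      · subst h
        simp [psiAux, phiAux, Ppoly, Finset.prod_range_one]
      · rw [Fin.eq_one_of_ne_zero i h]
        simp [psiAux, phiAux]
    rw [hfix]
  have h2 : Ψ.comp Φ = AlgHom.id ℂ (petersonQuot n) := by
    apply Ideal.Quotient.algHom_ext
    apply MvPolynomial.algHom_ext
    intro o
    simp only [AlgHom.coe_comp, Function.comp_apply, Ideal.Quotient.mkₐ_eq_mk, AlgHom.coe_id,
      id_eq]
    rw [hΦmk, hΨmk]
    cases o with
    | none =>
      rw [phiAux_X_none, show (psiAux n hn) (X 1) = X none by simp [psiAux]]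
    | some j =>
      rw [phiAux_X_some, psiAux_P n hn]
      rw [Ideal.Quotient.mk_eq_mk_iff_sub_mem]
      have hm := X_sub_Q_mem n hn (j : ℕ) j.isLt
      rw [show (⟨(j : ℕ), j.isLt⟩ : Fin n) = j from Fin.ext rfl] at hm
      simpa [neg_sub] using neg_mem hm
  refine ⟨AlgEquiv.ofAlgHom Φ Ψ h1 h2, ?_, ?_⟩
  · intro j
    show Φ (Ideal.Quotient.mk I (X (some j))) = _
    rw [hΦmk, phiAux_X_some]
    rfl
  · show Φ (Ideal.Quotient.mk I (X none)) = _
    rw [hΦmk, phiAux_X_none]
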